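/- A graph G is square-stable if and only if there exists a maximum stable set S₀ of G with the property that for every stable set A of G disjoint from S₀, there exists a subset S* ⊆ S₀ such that A ∪ S* is a maximum stable set of G. -/

import Mathlib

open SimpleGraph

attribute [local instance] Classical.propDecidable

variable {V : Type*}

/-- A stable (independent) set: pairwise non-adjacent vertices. -/
def IsStable (G : SimpleGraph V) (S : Finset V) : Prop :=
  ∀ ⦃a⦄, a ∈ S → ∀ ⦃b⦄, b ∈ S → ¬ G.Adj a b

/-- The stability (independence) number α(G). -/
noncomputable def alpha [Fintype V] (G : SimpleGraph V) : ℕ :=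
  (Finset.univ.powerset.filter (fun S => IsStable G S)).sup Finset.card

/-- A maximum stable set, i.e. a member of Ω(G). -/
def IsMaxStable [Fintype V] (G : SimpleGraph V) (S : Finset V) : Prop :=
  IsStable G S ∧ S.card = alpha G

/-- The square G² of a graph: distinct vertices adjacent iff at distance ≤ 2. -/
def square (G : SimpleGraph V) : SimpleGraph V where
  Adj u v := u ≠ v ∧ (G.Adj u v ∨ ∃ w, G.Adj u w ∧ G.Adj w v)
  symm := by
    constructor
    rintro u v ⟨h, h2⟩
    refine ⟨h.symm, ?_⟩
    rcases h2 with h2 | ⟨w, hw1, hw2⟩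
    · exact Or.inl h2.symm
    · exact Or.inr ⟨w, hw2.symm, hw1.symm⟩
  loopless := by constructor; rintro u ⟨h, _⟩; exact h rfl

/-- G is α-square-stable if α(G) = α(G²). -/
def SquareStable [Fintype V] (G : SimpleGraph V) : Prop :=
  alpha G = alpha (square G)

/-- The maximum matching size μ(G). -/
noncomputable def mu [Fintype V] (G : SimpleGraph V) : ℕ :=
  sSup {n | ∃ M : G.Subgraph, M.IsMatching ∧ M.verts.ncard = 2 * n}

/-- f realizes a matching of A into S: it sends each a ∈ A to a distinct
neighbour in S (so the corresponding edges form a matching ⊆ (A,S) saturating A). -/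
def MatchedInto (G : SimpleGraph V) (A S : Finset V) (f : V → V) : Prop :=
  (∀ a ∈ A, f a ∈ S ∧ G.Adj a (f a)) ∧ ∀ a ∈ A, ∀ b ∈ A, f a = f b → a = b

/-- Well-covered: no isolated vertices, and every maximal stable set is maximum. -/
def WellCovered [Fintype V] (G : SimpleGraph V) : Prop :=
  (∀ v : V, ∃ w, G.Adj v w) ∧
    ∀ S : Finset V, IsStable G S → (∀ T : Finset V, IsStable G T → S ⊆ T → S = T) →
      S.card = alpha G

/-- Very well-covered: well-covered and |V(G)| = 2α(G). -/
def VeryWellCovered [Fintype V] (G : SimpleGraph V) : Prop :=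
  WellCovered G ∧ Fintype.card V = 2 * alpha G

/-- The set of pendant (degree-one) vertices of G. -/
noncomputable def pendants [Fintype V] (G : SimpleGraph V) : Finset V :=
  Finset.univ.filter (fun v => G.degree v = 1)

/-- G has a perfect matching consisting of pendant edges. -/
def HasPendantPerfectMatching [Fintype V] (G : SimpleGraph V) : Prop :=
  ∃ M : G.Subgraph, M.IsPerfectMatching ∧
    ∀ a b : V, M.Adj a b → G.degree a = 1 ∨ G.degree b = 1

/-- The star K_{1,n}: vertex 0 is the center, adjacent to n leaves. -/
def starGraph (n : ℕ) : SimpleGraph (Fin (n + 1)) where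
  Adj u v := u ≠ v ∧ (u = 0 ∨ v = 0)
  symm := by constructor; rintro u v ⟨h1, h2⟩; exact ⟨h1.symm, h2.symm⟩
  loopless := by constructor; rintro u ⟨h, _⟩; exact h rfl

lemma stable_card_le_alpha [Fintype V] {G : SimpleGraph V} {S : Finset V}
    (h : IsStable G S) : S.card ≤ alpha G := by
  apply Finset.le_sup
  simp [Finset.mem_filter, Finset.mem_powerset, h, Finset.subset_univ]

lemma stable_of_square_stable {G : SimpleGraph V} {S : Finset V}
    (h : IsStable (square G) S) : IsStable G S := by
  intro a ha b hb hab
  exact h ha hb ⟨G.ne_of_adj hab, Or.inl hab⟩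

lemma alpha_square_le [Fintype V] (G : SimpleGraph V) :
    alpha (square G) ≤ alpha G := by
  apply Finset.sup_le
  intro S hS
  simp only [Finset.mem_filter] at hS
  exact stable_card_le_alpha (stable_of_square_stable hS.2)

lemma exists_max_stable_square [Fintype V] (G : SimpleGraph V) :
    ∃ S, IsStable (square G) S ∧ S.card = alpha (square G) := by
  obtain ⟨S, hS, h⟩ := Finset.exists_mem_eq_sup
    (Finset.univ.powerset.filter (fun S => IsStable (square G) S))
    ⟨∅, by simp [IsStable]⟩ Finset.card
  simp only [Finset.mem_filter] at hS
  exact ⟨S, hS.2, h.symm⟩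

/-- G is square-stable iff some maximum stable set S₀ satisfies: for every stable set A
disjoint from S₀ there is S* ⊆ S₀ with A ∪ S* a maximum stable set. -/
theorem stmt14 [Fintype V] [DecidableEq V] (G : SimpleGraph V) :
    SquareStable G ↔
      ∃ S₀ : Finset V, IsMaxStable G S₀ ∧
        ∀ A : Finset V, IsStable G A → Disjoint A S₀ →
          ∃ S' ⊆ S₀, IsMaxStable G (A ∪ S') := by
  constructor
  · intro hsq
    obtain ⟨S₀, hS₀sq, hcard⟩ := exists_max_stable_square G
    have hS₀ : IsStable G S₀ := stable_of_square_stable hS₀sq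
    have hcard' : S₀.card = alpha G := by rw [hcard, ← hsq]
    refine ⟨S₀, ⟨hS₀, hcard'⟩, ?_⟩
    intro A hA hdisj
    set S' := S₀.filter (fun s => ∀ a ∈ A, ¬ G.Adj a s) with hS'def
    have hsubset : S' ⊆ S₀ := Finset.filter_subset _ _
    have hstab : IsStable G (A ∪ S') := by
      intro x hx y hy hxy
      rcases Finset.mem_union.1 hx with hxA | hxS
      · rcases Finset.mem_union.1 hy with hyA | hyS
        · exact hA hxA hyA hxy
        · exact (Finset.mem_filter.1 hyS).2 x hxA hxy
      · rcases Finset.mem_union.1 hy with hyA | hyS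
        · exact (Finset.mem_filter.1 hxS).2 y hyA hxy.symm
        · exact hS₀ (hsubset hxS) (hsubset hyS) hxy
    refine ⟨S', hsubset, hstab, ?_⟩
    have hmap : ∀ s : V, ∃ a : V, s ∈ S₀ \ S' → a ∈ A ∧ G.Adj a s := by
      intro s
      by_cases hs : s ∈ S₀ \ S'
      · have hmem := Finset.mem_sdiff.1 hs
        have hnot : ¬ (∀ a ∈ A, ¬ G.Adj a s) := fun h =>
          hmem.2 (Finset.mem_filter.2 ⟨hmem.1, h⟩)
        push_neg at hnot
        obtain ⟨a, ha, hadj⟩ := hnot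
        exact ⟨a, fun _ => ⟨ha, hadj⟩⟩
      · exact ⟨s, fun h => absurd h hs⟩
    choose f hf using hmap
    have hsub : (S₀ \ S').card ≤ A.card := by
      apply Finset.card_le_card_of_injOn f
      · intro s hs; exact (hf s hs).1
      · intro s hs t ht hst
        by_contra hne
        have hsadj := (hf s hs).2
        have htadj := (hf t ht).2
        have hadj2 : (square G).Adj s t := by
          refine ⟨hne, Or.inr ⟨f s, hsadj.symm, ?_⟩⟩
          rw [hst]; exact htadj
        exact hS₀sq (Finset.mem_sdiff.1 hs).1 (Finset.mem_sdiff.1 ht).1 hadj2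
    have h1 : Disjoint A S' := hdisj.mono_right hsubset
    have h2 : (A ∪ S').card = A.card + S'.card := Finset.card_union_of_disjoint h1
    have h3 : (S₀ \ S').card + S'.card = S₀.card :=
      Finset.card_sdiff_add_card_eq_card hsubset
    have hle := stable_card_le_alpha hstab
    omega
  · rintro ⟨S₀, ⟨hS₀, hcard⟩, hprop⟩
    have hsqstable : IsStable (square G) S₀ := by
      intro s hs t ht hadj
      obtain ⟨hne, h2⟩ := hadj
      rcases h2 with h | ⟨w, hsw, hwt⟩
      · exact hS₀ hs ht h
      · have hwS : w ∉ S₀ := fun hw => hS₀ hs hw hsw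
        have hstA : IsStable G {w} := by
          intro a ha b hb
          simp only [Finset.mem_singleton] at ha hb
          subst ha; subst hb; exact G.loopless.irrefl _
        have hdisj : Disjoint ({w} : Finset V) S₀ := by simp [hwS]
        obtain ⟨S', hsub, hst, hc⟩ := hprop {w} hstA hdisj
        have hwmem : w ∈ ({w} : Finset V) ∪ S' := Finset.mem_union_left _ (by simp)
        have hsS' : s ∉ S' := fun h =>
          hst hwmem (Finset.mem_union_right _ h) hsw.symm
        have htS' : t ∉ S' := fun h =>
          hst hwmem (Finset.mem_union_right _ h) hwt
        have hsub2 : S' ⊆ S₀ \ {s, t} := by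
          intro x hx
          rw [Finset.mem_sdiff]
          refine ⟨hsub hx, ?_⟩
          simp only [Finset.mem_insert, Finset.mem_singleton]
          rintro (rfl | rfl)
          · exact hsS' hx
          · exact htS' hx
        have hstsub : ({s, t} : Finset V) ⊆ S₀ := by
          intro x hx
          simp only [Finset.mem_insert, Finset.mem_singleton] at hx
          rcases hx with rfl | rfl
          · exact hs
          · exact ht
        have hcardst : ({s, t} : Finset V).card = 2 := by
          rw [Finset.card_insert_of_notMem (by simpa using hne), Finset.card_singleton]
        have hS'le : S'.card ≤ S₀.card - 2 := by
          calc S'.card ≤ (S₀ \ {s, t}).card := Finset.card_le_card hsub2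
            _ = S₀.card - 2 := by rw [Finset.card_sdiff_of_subset hstsub, hcardst]
        have hcu : (({w} : Finset V) ∪ S').card ≤ 1 + S'.card := by
          calc (({w} : Finset V) ∪ S').card ≤ ({w} : Finset V).card + S'.card :=
              Finset.card_union_le _ _
            _ = 1 + S'.card := by rw [Finset.card_singleton]
        have h2le : 2 ≤ S₀.card := by
          calc 2 = ({s, t} : Finset V).card := hcardst.symm
            _ ≤ S₀.card := Finset.card_le_card hstsub
        omega
    have hge : alpha G ≤ alpha (square G) := by
      rw [← hcard]; exact stable_card_le_alpha hsqstable
    exact le_antisymm hge (alpha_square_le G)
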